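/- Let φ = dF : U → ℂ^{2n} be the Kählerian Lagrangian immersion defined by a holomorphic function F on a simply connected open set U ⊂ ℂ^n with det Im ∂²F ≠ 0. Then the induced metric g = Re φ*γ is given in the holomorphic coordinates z^i by g = Σ_{i,j} Im(∂²F/∂z^i∂z^j) dz^i · dz̄^j (up to a universal positive constant), i.e., the Kähler potential is K = Im Σ z̄^i ∂F/∂z^i (up to constants). -/

import Mathlib

noncomputable section

/-- `V = ℂ^{2n} = T*ℂ^n` with coordinates `(z, w)`. -/
abbrev Vsp (n : ℕ) := (Fin n → ℂ) × (Fin n → ℂ)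

/-- The canonical complex symplectic form `Ω = Σ dz^i ∧ dw_i`. -/
def Omg (n : ℕ) (u v : Vsp n) : ℂ := ∑ i, (u.1 i * v.2 i - u.2 i * v.1 i)

/-- Complex conjugation with respect to the real form `ℝ^{2n}`. -/
def tauC (n : ℕ) (v : Vsp n) : Vsp n :=
  (fun i => starRingEnd ℂ (v.1 i), fun i => starRingEnd ℂ (v.2 i))

/-- The Hermitian form `γ(u,v) = i·Ω(u, τ v)`. -/
def gammaH (n : ℕ) (u v : Vsp n) : ℂ := Complex.I * Omg n u (tauC n v)

/-- The differential `dφ_z` of `φ = dF` applied to a tangent vector `a ∈ ℂ^n`. -/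
def dphiF (n : ℕ) (F : (Fin n → ℂ) → ℂ) (z : Fin n → ℂ) (a : Fin n → ℂ) : Vsp n :=
  (a, fun i => fderiv ℂ (fun w => fderiv ℂ F w (Pi.single i 1)) z a)

/-- The holomorphic Hessian matrix `∂²F = (∂²F/∂z^i∂z^j)` of `F` at `z`. -/
def hessF (n : ℕ) (F : (Fin n → ℂ) → ℂ) (z : Fin n → ℂ) : Matrix (Fin n) (Fin n) ℂ :=
  fun i j => fderiv ℂ (fun w => fderiv ℂ F w (Pi.single j 1)) z (Pi.single i 1)

open Complex Metric Set
open scoped Real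

lemma fderiv_apply_diffAt {n : ℕ} {U : Set (Fin n → ℂ)} (hU : IsOpen U)
    {F : (Fin n → ℂ) → ℂ} (hF : DifferentiableOn ℂ F U) {z : Fin n → ℂ} (hz : z ∈ U)
    (e : Fin n → ℂ) (he : ‖e‖ ≤ 1) :
    DifferentiableAt ℂ (fun w => fderiv ℂ F w e) z := by
  obtain ⟨ε, εpos, hball⟩ := Metric.isOpen_iff.1 hU z hz
  set r : ℝ := ε / 8 with hrdef
  have hr : 0 < r := by positivity
  have hsub : closedBall z (4 * r) ⊆ U := by
    intro x hx
    apply hball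
    have : dist x z ≤ 4 * r := mem_closedBall.1 hx
    rw [mem_ball]
    calc dist x z ≤ 4 * r := this
      _ < ε := by rw [hrdef]; linarith
  obtain ⟨M, hM⟩ := (isCompact_closedBall z (4 * r)).exists_bound_of_continuousOn
    (hF.continuousOn.mono hsub)
  have hM0 : 0 ≤ M := le_trans (norm_nonneg (F z)) (hM z (mem_closedBall_self (by positivity)))
  -- slices are differentiable
  have hslice : ∀ u ∈ closedBall z (2 * r), ∀ c : Fin n → ℂ, ‖c‖ ≤ 1 →
      DifferentiableOn ℂ (fun t : ℂ => F (u + t • c)) (closedBall (0 : ℂ) (2 * r)) := by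
    intro u hu c hc t ht
    have hmem : u + t • c ∈ U := by
      apply hsub
      rw [mem_closedBall, dist_eq_norm]
      calc ‖u + t • c - z‖ ≤ ‖u - z‖ + ‖t • c‖ := by
            rw [show u + t • c - z = (u - z) + t • c by abel]; exact norm_add_le _ _
        _ ≤ 2 * r + ‖t‖ * ‖c‖ := by
            rw [norm_smul]
            gcongr
            rwa [← dist_eq_norm, ← mem_closedBall]
        _ ≤ 2 * r + 2 * r * 1 := by
            have := mem_closedBall_zero_iff.1 ht
            gcongr
        _ ≤ 4 * r := by linarith
    have haff : DifferentiableAt ℂ (fun t : ℂ => u + t • c) t :=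
      ((differentiableAt_id).smul_const c).const_add u
    exact ((hF.differentiableAt (hU.mem_nhds hmem)).comp t haff).differentiableWithinAt
  -- derivative of slice at 0
  have hderiv_slice : ∀ u ∈ U, ∀ c : Fin n → ℂ,
      HasDerivAt (fun t : ℂ => F (u + t • c)) (fderiv ℂ F u c) 0 := by
    intro u hu c
    have h1 : HasDerivAt (fun t : ℂ => u + t • c) c 0 := by
      simpa using ((hasDerivAt_id (0 : ℂ)).smul_const c).const_add u
    have h2 : HasFDerivAt F (fderiv ℂ F u) (u + (0 : ℂ) • c) := by
      simpa using (hF.differentiableAt (hU.mem_nhds hu)).hasFDerivAt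
    exact h2.comp_hasDerivAt (0 : ℂ) h1
  -- Cauchy estimate on the operator norm of fderiv
  have hopb : ∀ u ∈ closedBall z (2 * r), ‖fderiv ℂ F u‖ ≤ M / r := by
    intro u hu
    have hunit : ∀ c : Fin n → ℂ, ‖c‖ ≤ 1 → ‖fderiv ℂ F u c‖ ≤ M / r := by
      intro c hc
      have hD : DiffContOnCl ℂ (fun t : ℂ => F (u + t • c)) (ball (0 : ℂ) r) := by
        apply DifferentiableOn.diffContOnCl
        rw [closure_ball (0 : ℂ) (ne_of_gt hr)]
        exact (hslice u hu c hc).mono (closedBall_subset_closedBall (by linarith))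
      have hCb : ∀ t ∈ sphere (0 : ℂ) r, ‖F (u + t • c)‖ ≤ M := by
        intro t ht
        apply hM
        rw [mem_closedBall, dist_eq_norm]
        have htr : ‖t‖ = r := by simpa using ht
        calc ‖u + t • c - z‖ ≤ ‖u - z‖ + ‖t • c‖ := by
              rw [show u + t • c - z = (u - z) + t • c by abel]; exact norm_add_le _ _
          _ ≤ 2 * r + r * 1 := by
              rw [norm_smul, htr]
              gcongr
              rwa [← dist_eq_norm, ← mem_closedBall]
          _ ≤ 4 * r := by linarith
      have hb := Complex.norm_deriv_le_of_forall_mem_sphere_norm_le hr hD hCb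
      rwa [(hderiv_slice u (hsub (closedBall_subset_closedBall (by linarith) hu)) c).deriv] at hb
    apply ContinuousLinearMap.opNorm_le_bound _ (by positivity)
    intro c
    rcases eq_or_ne c 0 with rfl | hc
    · simp
    · have hcpos : 0 < ‖c‖ := norm_pos_iff.2 hc
      have h1 : ‖(‖c‖⁻¹ • c : Fin n → ℂ)‖ ≤ 1 := by
        rw [norm_smul, norm_inv, norm_norm, inv_mul_cancel₀ (ne_of_gt hcpos)]
      have h2 := hunit _ h1
      rw [ContinuousLinearMap.map_smul_of_tower, norm_smul, norm_inv, norm_norm] at h2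
      calc ‖fderiv ℂ F u c‖ = ‖c‖ * (‖c‖⁻¹ * ‖fderiv ℂ F u c‖) := by
            field_simp
        _ ≤ ‖c‖ * (M / r) := by gcongr
        _ = M / r * ‖c‖ := by ring
  -- the integral representation and parametric differentiation
  set Phi : (Fin n → ℂ) → ℝ → ℂ := fun w θ =>
    (deriv (circleMap 0 r) θ * ((circleMap 0 r θ) ^ 2)⁻¹) • F (w + circleMap 0 r θ • e) with hPhi
  set Phi' : (Fin n → ℂ) → ℝ → (Fin n → ℂ) →L[ℂ] ℂ := fun w θ =>
    (deriv (circleMap 0 r) θ * ((circleMap 0 r θ) ^ 2)⁻¹) •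
      fderiv ℂ F (w + circleMap 0 r θ • e) with hPhi'
  have hmem2 : ∀ w ∈ ball z r, ∀ θ : ℝ, w + circleMap 0 r θ • e ∈ closedBall z (2 * r) := by
    intro w hw θ
    rw [mem_closedBall, dist_eq_norm]
    calc ‖w + circleMap 0 r θ • e - z‖ ≤ ‖w - z‖ + ‖circleMap 0 r θ • e‖ := by
          rw [show w + circleMap 0 r θ • e - z = (w - z) + circleMap 0 r θ • e by abel]
          exact norm_add_le _ _
      _ ≤ r + r * 1 := by
          rw [norm_smul]
          gcongr
          · exact le_of_lt (by rwa [← dist_eq_norm, ← mem_ball])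
          · rw [norm_circleMap_zero, abs_of_pos hr]
      _ ≤ 2 * r := by linarith
  have hrep : ∀ w ∈ ball z r,
      fderiv ℂ F w e = (2 * π * Complex.I)⁻¹ • ∫ θ in (0:ℝ)..(2 * π), Phi w θ := by
    intro w hw
    have hwc : w ∈ closedBall z (2 * r) :=
      closedBall_subset_closedBall (by linarith) (ball_subset_closedBall hw)
    have hde : DifferentiableOn ℂ (fun t : ℂ => F (w + t • e)) (ball (0 : ℂ) (2 * r)) :=
      (hslice w hwc e he).mono ball_subset_closedBall
    have h1 : Complex.cderiv r (fun t : ℂ => F (w + t • e)) 0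
        = deriv (fun t : ℂ => F (w + t • e)) 0 :=
      Complex.cderiv_eq_deriv isOpen_ball hde hr (closedBall_subset_ball (by linarith))
    have h2 : deriv (fun t : ℂ => F (w + t • e)) 0 = fderiv ℂ F w e :=
      (hderiv_slice w (hsub (closedBall_subset_closedBall (by linarith) hwc)) e).deriv
    rw [← h2, ← h1]
    rw [Complex.cderiv, circleIntegral]
    congr 1
    refine intervalIntegral.integral_congr fun θ _ => ?_
    simp only [hPhi, sub_zero, smul_eq_mul]
    ring
  have hcont : ∀ x ∈ ball z r, Continuous (Phi x) := by
    intro x hx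
    have h1 : Continuous fun θ : ℝ => deriv (circleMap 0 r) θ := by
      simp only [deriv_circleMap]
      exact (continuous_circleMap 0 r).mul continuous_const
    have h2 : Continuous fun θ : ℝ => ((circleMap 0 r θ) ^ 2)⁻¹ := by
      refine Continuous.inv₀ ((continuous_circleMap 0 r).pow 2) fun θ => ?_
      exact pow_ne_zero 2 (circleMap_ne_center (ne_of_gt hr))
    have h3 : Continuous fun θ : ℝ => F (x + circleMap 0 r θ • e) := by
      refine hF.continuousOn.comp_continuous
        (continuous_const.add ((continuous_circleMap 0 r).smul continuous_const))
        fun θ => ?_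
      exact hsub (closedBall_subset_closedBall (by linarith) (hmem2 x hx θ))
    exact ((h1.mul h2).smul h3)
  have key := intervalIntegral.hasFDerivAt_integral_of_dominated_of_fderiv_le
    (F := Phi) (F' := Phi') (x₀ := z) (a := (0:ℝ)) (b := 2 * π)
    (μ := MeasureTheory.volume) (bound := fun _ => 1 / r * (M / r)) (s := ball z r) (ball_mem_nhds z hr)
    ?_ ?_ ?_ ?_ ?_ ?_
  · have heq : (fun w => fderiv ℂ F w e)
        =ᶠ[nhds z] fun w => (2 * π * Complex.I)⁻¹ • ∫ θ in (0:ℝ)..(2 * π), Phi w θ := by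
      filter_upwards [ball_mem_nhds z hr] with w hw using hrep w hw
    exact ((key.const_smul ((2 * π * Complex.I)⁻¹)).differentiableAt).congr_of_eventuallyEq heq
  · filter_upwards [ball_mem_nhds z hr] with x hx
    exact (hcont x hx).aestronglyMeasurable
  · exact (hcont z (mem_ball_self hr)).intervalIntegrable 0 (2 * π)
  · refine MeasureTheory.AEStronglyMeasurable.smul
      (f := fun θ => deriv (circleMap 0 r) θ * ((circleMap 0 r θ) ^ 2)⁻¹)
      (g := fun θ => fderiv ℂ F (z + circleMap 0 r θ • e)) ?_ ?_
    · apply Continuous.aestronglyMeasurable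
      simp only [deriv_circleMap]
      exact ((continuous_circleMap 0 r).mul continuous_const).mul
        (Continuous.inv₀ ((continuous_circleMap 0 r).pow 2)
          fun θ => pow_ne_zero 2 (circleMap_ne_center (ne_of_gt hr)))
    · exact ((measurable_fderiv ℂ F).comp
        (continuous_const.add
          ((continuous_circleMap 0 r).smul continuous_const)).measurable).aestronglyMeasurable
  · apply MeasureTheory.ae_of_all
    intro θ _ x hx
    have hb1 : ‖fderiv ℂ F (x + circleMap 0 r θ • e)‖ ≤ M / r := hopb _ (hmem2 x hx θ)
    have habs : ‖circleMap 0 r θ‖ = r := by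
      rw [norm_circleMap_zero, abs_of_pos hr]
    have hns : ‖Phi' x θ‖
        = ‖deriv (circleMap 0 r) θ * ((circleMap 0 r θ) ^ 2)⁻¹‖ *
          ‖fderiv ℂ F (x + circleMap 0 r θ • e)‖ :=
      norm_smul (deriv (circleMap 0 r) θ * ((circleMap 0 r θ) ^ 2)⁻¹)
        (fderiv ℂ F (x + circleMap 0 r θ • e))
    calc ‖Phi' x θ‖
        = ‖deriv (circleMap 0 r) θ * ((circleMap 0 r θ) ^ 2)⁻¹‖ *
          ‖fderiv ℂ F (x + circleMap 0 r θ • e)‖ := hns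
      _ ≤ 1 / r * (M / r) := by
          apply mul_le_mul _ hb1 (norm_nonneg _) (by positivity)
          rw [deriv_circleMap]
          simp only [norm_mul, norm_inv, norm_pow, Complex.norm_I, habs, mul_one]
          rw [show r * (r ^ 2)⁻¹ = 1 / r by field_simp]
  · exact intervalIntegrable_const
  · apply MeasureTheory.ae_of_all
    intro θ _ x hx
    have hmem : x + circleMap 0 r θ • e ∈ U :=
      hsub (closedBall_subset_closedBall (by linarith) (hmem2 x hx θ))
    have h2 : HasFDerivAt F (fderiv ℂ F (x + circleMap 0 r θ • e)) (x + circleMap 0 r θ • e) :=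
      (hF.differentiableAt (hU.mem_nhds hmem)).hasFDerivAt
    have h3 : HasFDerivAt (fun w : Fin n → ℂ => w + circleMap 0 r θ • e)
        (ContinuousLinearMap.id ℂ (Fin n → ℂ)) x := (hasFDerivAt_id x).add_const _
    have h4 := h2.comp x h3
    rw [ContinuousLinearMap.comp_id] at h4
    exact h4.const_smul (deriv (circleMap 0 r) θ * ((circleMap 0 r θ) ^ 2)⁻¹)

lemma hess_symm_aux {n : ℕ} {U : Set (Fin n → ℂ)} (hU : IsOpen U)
    {F : (Fin n → ℂ) → ℂ} (hF : DifferentiableOn ℂ F U) {z : Fin n → ℂ} (hz : z ∈ U)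
    (i j : Fin n) :
    fderiv ℂ (fun w => fderiv ℂ F w (Pi.single j 1)) z (Pi.single i 1)
      = fderiv ℂ (fun w => fderiv ℂ F w (Pi.single i 1)) z (Pi.single j 1) := by
  classical
  have hsingle : ∀ k : Fin n, ‖(Pi.single k 1 : Fin n → ℂ)‖ ≤ 1 := by
    intro k
    rw [Pi.norm_single]
    simp
  have hdiffg : ∀ k : Fin n, DifferentiableAt ℂ (fun w => fderiv ℂ F w (Pi.single k 1)) z :=
    fun k => fderiv_apply_diffAt hU hF hz _ (hsingle k)
  -- linear reassembly map
  let lin : (Fin n → ℂ) →ₗ[ℂ] ((Fin n → ℂ) →L[ℂ] ℂ) :=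
    { toFun := fun c => ∑ k, c k • (ContinuousLinearMap.proj k : (Fin n → ℂ) →L[ℂ] ℂ)
      map_add' := by
        intro x y
        refine ContinuousLinearMap.ext fun a => ?_
        simp [Finset.sum_add_distrib, add_mul]
      map_smul' := by
        intro m x
        refine ContinuousLinearMap.ext fun a => ?_
        simp [Finset.mul_sum, mul_assoc] }
  let L : (Fin n → ℂ) →L[ℂ] ((Fin n → ℂ) →L[ℂ] ℂ) :=
    { lin with cont := lin.continuous_of_finiteDimensional }
  have clm_sum : ∀ (T : (Fin n → ℂ) →L[ℂ] ℂ) (a : Fin n → ℂ),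
      T a = ∑ k, a k * T (Pi.single k 1) := by
    intro T a
    have ha : a = ∑ k, a k • (Pi.single k (1 : ℂ) : Fin n → ℂ) := by
      ext m
      simp [Pi.single_apply]
    conv_lhs => rw [ha]
    rw [map_sum]
    simp [smul_eq_mul]
  have hrepr : ∀ w, fderiv ℂ F w = L (fun k => fderiv ℂ F w (Pi.single k 1)) := by
    intro w
    apply ContinuousLinearMap.ext
    intro a
    rw [clm_sum (fderiv ℂ F w) a]
    show _ = (∑ k, (fderiv ℂ F w (Pi.single k 1)) • (ContinuousLinearMap.proj k : (Fin n → ℂ) →L[ℂ] ℂ)) a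
    rw [ContinuousLinearMap.sum_apply]
    refine Finset.sum_congr rfl fun k _ => ?_
    simp [mul_comm]
  have hd : DifferentiableAt ℂ (fun w => fderiv ℂ F w) z := by
    have h1 : DifferentiableAt ℂ (fun w => (fun k => fderiv ℂ F w (Pi.single k 1))) z :=
      differentiableAt_pi.2 hdiffg
    have h2 : DifferentiableAt ℂ (fun w => L (fun k => fderiv ℂ F w (Pi.single k 1))) z :=
      (L.differentiable.differentiableAt).comp z h1
    exact h2.congr_of_eventuallyEq (Filter.Eventually.of_forall hrepr)
  have hf'' : HasFDerivAt (fun w => fderiv ℂ F w) (fderiv ℂ (fun w => fderiv ℂ F w) z) z :=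
    hd.hasFDerivAt
  set f'' := fderiv ℂ (fun w => fderiv ℂ F w) z with hf''def
  have hev : ∀ᶠ y in nhds z, HasFDerivAt F (fderiv ℂ F y) y := by
    filter_upwards [hU.mem_nhds hz] with y hy
    exact (hF.differentiableAt (hU.mem_nhds hy)).hasFDerivAt
  have hsym := second_derivative_symmetric_of_eventually hev hf''
  have hh : ∀ p q : Fin n, fderiv ℂ (fun w => fderiv ℂ F w (Pi.single q 1)) z (Pi.single p 1)
      = f'' (Pi.single p 1) (Pi.single q 1) := by
    intro p q
    have happ : HasFDerivAt (fun w => fderiv ℂ F w (Pi.single q 1))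
        ((ContinuousLinearMap.apply ℂ ℂ (Pi.single q 1 : Fin n → ℂ)).comp f'') z :=
      ((ContinuousLinearMap.apply ℂ ℂ (Pi.single q 1 : Fin n → ℂ)).hasFDerivAt).comp z hf''
    rw [happ.fderiv]
    simp
  rw [hh i j, hh j i, hsym]

lemma clm_apply_eq_sum {n : ℕ} (L : (Fin n → ℂ) →L[ℂ] ℂ) (a : Fin n → ℂ) :
    L a = ∑ j, a j * L (Pi.single j 1) := by
  have ha : a = ∑ j, a j • (Pi.single j (1 : ℂ) : Fin n → ℂ) := by
    ext k
    simp [Pi.single_apply]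
  conv_lhs => rw [ha]
  rw [map_sum]
  simp [smul_eq_mul]


/-- For the Kählerian Lagrangian immersion `φ = dF` defined by a holomorphic `F` on a
simply connected open `U ⊂ ℂ^n` with `det Im ∂²F ≠ 0`, the induced Hermitian metric in
the holomorphic coordinates `z^i` is `φ*γ = 2 Σ Im(∂²F/∂z^i∂z^j) dz^i ⊗ dz̄^j`, and
`g = Re φ*γ = Σ Im(∂²F/∂z^i∂z^j) dz^i · dz̄^j` (up to the universal constant 2);
equivalently `K = 2 Im Σ z̄^i ∂F/∂z^i` is a Kähler potential for `g`. -/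
theorem stmt18 (n : ℕ) (U : Set (Fin n → ℂ)) (hU : IsOpen U) (hUc : SimplyConnectedSpace U)
    (F : (Fin n → ℂ) → ℂ) (hF : DifferentiableOn ℂ F U)
    (hnd : ∀ z ∈ U, Matrix.det ((hessF n F z).map Complex.im) ≠ 0)
    (z : Fin n → ℂ) (hz : z ∈ U) (a b : Fin n → ℂ) :
    gammaH n (dphiF n F z a) (dphiF n F z b)
      = 2 * ∑ i, ∑ j, (((hessF n F z i j).im : ℂ) * a i * starRingEnd ℂ (b j)) ∧
    (gammaH n (dphiF n F z a) (dphiF n F z b)).re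
      = 2 * ∑ i, ∑ j, ((hessF n F z i j).im *
          ((a i).re * (b j).re + (a i).im * (b j).im)) := by
  have hsymm : ∀ i j, hessF n F z i j = hessF n F z j i := fun i j =>
    hess_symm_aux hU hF hz i j
  have hw : ∀ (c : Fin n → ℂ) (i : Fin n),
      fderiv ℂ (fun w => fderiv ℂ F w (Pi.single i 1)) z c = ∑ j, c j * hessF n F z j i :=
    fun c i => clm_apply_eq_sum _ c
  have goal1 : gammaH n (dphiF n F z a) (dphiF n F z b)
      = 2 * ∑ i, ∑ j, (((hessF n F z i j).im : ℂ) * a i * starRingEnd ℂ (b j)) := by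
    set H := hessF n F z with hH
    calc gammaH n (dphiF n F z a) (dphiF n F z b)
        = ∑ i, ∑ j, (Complex.I * starRingEnd ℂ (H j i) * (a i * starRingEnd ℂ (b j))
            - Complex.I * H j i * (a j * starRingEnd ℂ (b i))) := by
          simp only [gammaH, Omg, tauC, dphiF, hw, map_sum, map_mul, Finset.mul_sum,
            Finset.sum_mul, mul_sub, ← Finset.sum_sub_distrib]
          refine Finset.sum_congr rfl fun i _ => Finset.sum_congr rfl fun j _ => ?_
          ring
      _ = ∑ i, ∑ j, (Complex.I * starRingEnd ℂ (H j i) * (a i * starRingEnd ℂ (b j)))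
            - ∑ i, ∑ j, (Complex.I * H i j * (a i * starRingEnd ℂ (b j))) := by
          simp only [Finset.sum_sub_distrib]
          congr 1
          exact Finset.sum_comm
      _ = ∑ i, ∑ j, ((2 : ℂ) * ((H i j).im : ℂ) * a i * starRingEnd ℂ (b j)) := by
          rw [← Finset.sum_sub_distrib]
          refine Finset.sum_congr rfl fun i _ => ?_
          rw [← Finset.sum_sub_distrib]
          refine Finset.sum_congr rfl fun j _ => ?_
          rw [hsymm j i]
          have hc : starRingEnd ℂ (H i j) = H i j - 2 * ((H i j).im : ℂ) * Complex.I := by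
            have h := Complex.sub_conj (H i j)
            push_cast at h
            linear_combination -h
          rw [hc]
          linear_combination (-2 * ((H i j).im : ℂ) * a i * starRingEnd ℂ (b j)) * Complex.I_mul_I
      _ = 2 * ∑ i, ∑ j, (((H i j).im : ℂ) * a i * starRingEnd ℂ (b j)) := by
          rw [Finset.mul_sum]
          refine Finset.sum_congr rfl fun i _ => ?_
          rw [Finset.mul_sum]
          refine Finset.sum_congr rfl fun j _ => ?_
          ring
  refine ⟨goal1, ?_⟩
  rw [goal1]
  rw [show ((2 : ℂ) * ∑ i, ∑ j, (((hessF n F z i j).im : ℂ) * a i * starRingEnd ℂ (b j))).re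
      = 2 * (∑ i, ∑ j, (((hessF n F z i j).im : ℂ) * a i * starRingEnd ℂ (b j))).re by
    simp [Complex.mul_re]]
  congr 1
  rw [Complex.re_sum]
  refine Finset.sum_congr rfl fun i _ => ?_
  rw [Complex.re_sum]
  refine Finset.sum_congr rfl fun j _ => ?_
  simp [Complex.mul_re, Complex.mul_im]
  ring
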